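/- With μ, i, the blocks B_1, …, B_i, and the ideal I as in the context, for every natural number n the ℚ-dimension of the degree-n homogeneous component of I (that is, of the intersection of I with the submodule of homogeneous polynomials of total degree n in MvPolynomial (Fin μ) ℚ) equals the number of functions a : Fin μ → ℕ with ∑_k a(k) = n such that for every j ∈ {1, …, i} there exists k ∈ B_j with a(k) > 0. (This computes the Hilbert function of the squarefree monomial ideal of Proposition 3.10 of the paper.) -/

import Mathlib

open MvPolynomial

private lemma degree_eq_sum_aux {μ : ℕ} (d : Fin μ →₀ ℕ) : d.degree = ∑ k, d k := by
  rw [Finsupp.degree]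
  exact Finset.sum_subset (Finset.subset_univ _) (by simp +contextual [Finsupp.notMem_support_iff])

private lemma prod_X_aux {μ i : ℕ} (k : Fin i → Fin μ) :
    (∏ j, MvPolynomial.X (k j) : MvPolynomial (Fin μ) ℚ)
      = MvPolynomial.monomial (∑ j, Finsupp.single (k j) 1) 1 := by
  rw [monomial_sum_one]
  rfl

private lemma dominance_aux {μ i : ℕ} (B : Fin i → Finset (Fin μ))
    (hdisj : ∀ j j', j ≠ j' → Disjoint (B j) (B j')) (d : Fin μ →₀ ℕ) :
    (∃ s ∈ {s : Fin μ →₀ ℕ | ∃ k : Fin i → Fin μ, (∀ j, k j ∈ B j) ∧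
        s = ∑ j, Finsupp.single (k j) 1}, s ≤ d) ↔ ∀ j, ∃ k ∈ B j, 0 < d k := by
  constructor
  · rintro ⟨s, ⟨k, hk, rfl⟩, hle⟩ j
    refine ⟨k j, hk j, ?_⟩
    have h1 : (1 : ℕ) ≤ (∑ j', Finsupp.single (k j') 1) (k j) := by
      rw [Finsupp.finset_sum_apply]
      have := Finset.single_le_sum
        (f := fun j' => (Finsupp.single (k j') 1 : Fin μ →₀ ℕ) (k j))
        (fun _ _ => Nat.zero_le _) (Finset.mem_univ j)
      simpa using this
    exact lt_of_lt_of_le Nat.zero_lt_one (h1.trans (Finsupp.le_def.mp hle (k j)))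
  · intro h
    choose k hk hk' using h
    have hkinj : Function.Injective k := by
      intro j j' hjj'
      by_contra hne
      exact Finset.disjoint_left.mp (hdisj j j' hne) (hk j) (hjj' ▸ hk j')
    refine ⟨∑ j, Finsupp.single (k j) 1, ⟨k, hk, rfl⟩, ?_⟩
    intro m
    rw [Finsupp.finset_sum_apply]
    by_cases hm : ∃ j, k j = m
    · obtain ⟨j₀, rfl⟩ := hm
      rw [Finset.sum_eq_single j₀ (fun j _ hj => by
        rw [Finsupp.single_apply, if_neg (fun h => hj (hkinj h))]) (by simp)]
      rw [Finsupp.single_eq_same]; exact hk' j₀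
    · rw [Finset.sum_eq_zero fun j _ => by
        rw [Finsupp.single_apply, if_neg (fun h => hm ⟨j, h⟩)]]
      exact Nat.zero_le _

/-- With `I ⊆ ℚ[x_1,…,x_μ]` the ideal generated by the squarefree monomials
`x_{k_1} ⋯ x_{k_i}` over tuples `(k_1,…,k_i) ∈ B_1 × ⋯ × B_i` (the `B_j ⊆ Fin μ` pairwise
disjoint and nonempty), for each `n` the ℚ-dimension of the degree-`n` homogeneous component
of `I` equals the number of `a : Fin μ → ℕ` with `∑ a = n` hitting each block positively. -/
theorem stmt_11 (μ : ℕ) (hμ : 1 ≤ μ) (i : ℕ) (B : Fin i → Finset (Fin μ))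
    (hB : ∀ j, (B j).Nonempty)
    (hdisj : ∀ j j', j ≠ j' → Disjoint (B j) (B j'))
    (I : Ideal (MvPolynomial (Fin μ) ℚ))
    (hI : I = Ideal.span {p : MvPolynomial (Fin μ) ℚ |
        ∃ k : Fin i → Fin μ, (∀ j, k j ∈ B j) ∧ p = ∏ j, MvPolynomial.X (k j)})
    (n : ℕ) :
    Module.finrank ℚ
        ↥(Submodule.restrictScalars ℚ I ⊓ MvPolynomial.homogeneousSubmodule (Fin μ) ℚ n)
      = Nat.card {a : Fin μ → ℕ // (∑ k, a k) = n ∧ ∀ j, ∃ k ∈ B j, 0 < a k} := by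
  classical
  set S₀ : Set (Fin μ →₀ ℕ) := {s | ∃ k : Fin i → Fin μ, (∀ j, k j ∈ B j) ∧
      s = ∑ j, Finsupp.single (k j) 1} with hS₀
  have hgen : {p : MvPolynomial (Fin μ) ℚ |
      ∃ k : Fin i → Fin μ, (∀ j, k j ∈ B j) ∧ p = ∏ j, MvPolynomial.X (k j)}
      = (fun s => monomial s (1 : ℚ)) '' S₀ := by
    ext p
    constructor
    · rintro ⟨k, hk, rfl⟩
      exact ⟨∑ j, Finsupp.single (k j) 1, ⟨k, hk, rfl⟩, (prod_X_aux k).symm⟩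
    · rintro ⟨s, ⟨k, hk, rfl⟩, rfl⟩
      exact ⟨k, hk, (prod_X_aux k).symm⟩
  rw [hgen] at hI
  set T : Set (Fin μ →₀ ℕ) := {a | (∑ k, a k) = n ∧ ∀ j, ∃ k ∈ B j, 0 < a k} with hT
  have hmemI : ∀ p : MvPolynomial (Fin μ) ℚ,
      p ∈ I ↔ ∀ d ∈ p.support, ∀ j, ∃ k ∈ B j, 0 < d k := by
    intro p
    rw [hI, mem_ideal_span_monomial_image]
    exact forall₂_congr fun d _ => dominance_aux B hdisj d
  have hspan : (Submodule.restrictScalars ℚ I ⊓ homogeneousSubmodule (Fin μ) ℚ n)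
      = Submodule.span ℚ ((fun s => monomial s (1 : ℚ)) '' T) := by
    apply le_antisymm
    · rintro p ⟨hpI, hph⟩
      rw [← p.support_sum_monomial_coeff]
      refine Submodule.sum_mem _ fun d hd => ?_
      have h1 : coeff d p ≠ 0 := mem_support_iff.mp hd
      have hdeg : (∑ k, d k) = n := by
        rw [← degree_eq_sum_aux, Finsupp.degree_eq_weight_one]
        exact (mem_homogeneousSubmodule _ _).mp hph h1
      have hhit := (hmemI p).mp hpI d hd
      have : monomial d (coeff d p) = coeff d p • monomial d 1 := by
        rw [smul_monomial, smul_eq_mul, mul_one]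
      rw [this]
      exact Submodule.smul_mem _ _ (Submodule.subset_span ⟨d, ⟨hdeg, hhit⟩, rfl⟩)
    · rw [Submodule.span_le]
      rintro _ ⟨d, ⟨hd1, hd2⟩, rfl⟩
      refine ⟨(hmemI _).mpr ?_, (mem_homogeneousSubmodule _ _).mpr
        (isHomogeneous_monomial _ (by rw [degree_eq_sum_aux]; exact hd1))⟩
      intro e he
      rw [support_monomial, if_neg one_ne_zero] at he
      rw [Finset.mem_singleton] at he
      subst he
      exact hd2
  have hTfin : T.Finite := by
    rw [Set.finite_coe_iff.symm]
    refine Finite.of_injective (fun a : T => (fun k => (⟨a.1 k, by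
      have h2 := a.2.1
      have h3 : a.1 k ≤ ∑ k', a.1 k' :=
        Finset.single_le_sum (fun _ _ => Nat.zero_le _) (Finset.mem_univ k)
      omega⟩ : Fin (n + 1)))) ?_
    intro a a' h
    ext k
    exact congrArg Fin.val (congrFun h k)
  have hminj : Function.Injective (fun s : Fin μ →₀ ℕ => monomial s (1 : ℚ)) :=
    monomial_left_injective one_ne_zero
  have hImfin : ((fun s => monomial s (1 : ℚ)) '' T).Finite := hTfin.image _
  have := hImfin.fintype
  have hli : LinearIndependent ℚ ((↑) : ((fun s => monomial s (1 : ℚ)) '' T) →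
      MvPolynomial (Fin μ) ℚ) := by
    have h0 : LinearIndependent ℚ (fun a : T => monomial (a : Fin μ →₀ ℕ) (1 : ℚ)) := by
      have hb := (basisMonomials (Fin μ) ℚ).linearIndependent
      rw [coe_basisMonomials] at hb
      exact hb.comp ((↑) : T → (Fin μ →₀ ℕ)) Subtype.val_injective
    exact LinearIndepOn.id_image (s := T) (v := fun s => monomial s (1 : ℚ)) h0
  rw [hspan, finrank_span_set_eq_card hli, Set.toFinset_card,
    ← Nat.card_eq_fintype_card, Nat.card_coe_set_eq, Set.ncard_image_of_injective _ hminj,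
    ← Nat.card_coe_set_eq]
  exact Nat.card_congr (Finsupp.equivFunOnFinite.subtypeEquiv fun a => Iff.rfl)
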